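/- Let V : (0,∞) → M₂(ℂ) be continuous, E₁, E₂, k² ∈ ℂ, and let u₁, u₂, ψ₀ : (0,∞) → M₂(ℂ) be twice differentiable invertible matrix solutions of −u_j'' + Vu_j = E_j u_j (j=1,2) and −ψ₀'' + Vψ₀ = k²ψ₀. Set w_j = u_j'u_j⁻¹, w_k = ψ₀'ψ₀⁻¹, assume w₂(r) − w₁(r) is invertible for all r, set W₂ = (E₁−E₂)(w₂−w₁)⁻¹, ũ₂ = (w₁−w₂)u₂, and w̃₂ = ũ₂'ũ₂⁻¹. Then for all r, (w̃₂ − ∂_r)((w₁ − ∂_r)ψ₀)(r) = [(−k² + E₁)·I + W₂(r)(w₁(r) − w_k(r))] ψ₀(r). -/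

import Mathlib

open Matrix Set

private lemma entry_mul_hasDerivAt {A B : ℝ → Matrix (Fin 2) (Fin 2) ℂ}
    {A' B' : Matrix (Fin 2) (Fin 2) ℂ} {r : ℝ}
    (hA : ∀ i j, HasDerivAt (fun t => A t i j) (A' i j) r)
    (hB : ∀ i j, HasDerivAt (fun t => B t i j) (B' i j) r) :
    ∀ i j, HasDerivAt (fun t => (A t * B t) i j) ((A' * B r + A r * B') i j) r := by
  intro i j
  have h : HasDerivAt (fun t => ∑ k, A t i k * B t k j)
      (∑ k, (A' i k * B r k j + A r i k * B' k j)) r :=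
    HasDerivAt.fun_sum (fun k _ => (hA i k).fun_mul (hB k j))
  simpa [Matrix.mul_apply, Matrix.add_apply, Finset.sum_add_distrib] using h

private lemma entry_inv_hasDerivAt {A : ℝ → Matrix (Fin 2) (Fin 2) ℂ}
    {A' : Matrix (Fin 2) (Fin 2) ℂ} {r : ℝ}
    (hA : ∀ i j, HasDerivAt (fun t => A t i j) (A' i j) r)
    (hAloc : ∀ᶠ t in nhds r, IsUnit (A t))
    (hAr : IsUnit (A r)) :
    ∀ i j, HasDerivAt (fun t => (A t)⁻¹ i j)
      ((-((A r)⁻¹ * A' * (A r)⁻¹)) i j) r := by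
  have hdet : HasDerivAt (fun t => (A t).det)
      (A' 0 0 * A r 1 1 + A r 0 0 * A' 1 1 - (A' 0 1 * A r 1 0 + A r 0 1 * A' 1 0)) r := by
    simp only [Matrix.det_fin_two]
    exact (((hA 0 0).mul (hA 1 1)).sub ((hA 0 1).mul (hA 1 0)))
  have hdetne : (A r).det ≠ 0 := ((Matrix.isUnit_iff_isUnit_det _).1 hAr).ne_zero
  have hdadj : ∀ i j, DifferentiableAt ℝ (fun t => (A t).adjugate i j) r := by
    intro i j
    fin_cases i <;> fin_cases j <;>
      simp only [Matrix.adjugate_fin_two, Matrix.cons_val', Matrix.cons_val_zero,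
        Matrix.cons_val_one, Matrix.head_cons, Matrix.empty_val',
        Matrix.cons_val_fin_one, Matrix.head_fin_const] <;>
      first
        | exact (hA _ _).differentiableAt
        | exact ((hA _ _).differentiableAt).neg
  have hdiff : ∀ i j, DifferentiableAt ℝ (fun t => (A t)⁻¹ i j) r := by
    intro i j
    have hfun : (fun t => (A t)⁻¹ i j) = fun t => ((A t).det)⁻¹ * (A t).adjugate i j := by
      funext t
      rw [Matrix.inv_def, Ring.inverse_eq_inv', Matrix.smul_apply, smul_eq_mul]
    rw [hfun]
    exact (hdet.differentiableAt.inv hdetne).mul (hdadj i j)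
  set B' : Matrix (Fin 2) (Fin 2) ℂ :=
    Matrix.of (fun i j => deriv (fun t => (A t)⁻¹ i j) r) with hB'def
  have hB' : ∀ i j, HasDerivAt (fun t => (A t)⁻¹ i j) (B' i j) r :=
    fun i j => (hdiff i j).hasDerivAt
  have hprod : ∀ i j, HasDerivAt (fun t => (A t * (A t)⁻¹) i j)
      ((A' * (A r)⁻¹ + A r * B') i j) r := entry_mul_hasDerivAt hA hB'
  have hzero : A' * (A r)⁻¹ + A r * B' = 0 := by
    ext i j
    have hev : (fun t => (1 : Matrix (Fin 2) (Fin 2) ℂ) i j)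
        =ᶠ[nhds r] fun t => (A t * (A t)⁻¹) i j := by
      filter_upwards [hAloc] with t ht
      rw [Matrix.mul_nonsing_inv _ ((Matrix.isUnit_iff_isUnit_det _).1 ht)]
    have := ((hprod i j).congr_of_eventuallyEq hev).unique (hasDerivAt_const r _)
    simpa using this
  have hinvmul : (A r)⁻¹ * A r = 1 :=
    Matrix.nonsing_inv_mul _ ((Matrix.isUnit_iff_isUnit_det _).1 hAr)
  have h1 : A r * B' = -(A' * (A r)⁻¹) := eq_neg_of_add_eq_zero_right hzero
  have hBval : B' = -((A r)⁻¹ * A' * (A r)⁻¹) := by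
    calc B' = (A r)⁻¹ * (A r * B') := by rw [← mul_assoc, hinvmul, one_mul]
      _ = (A r)⁻¹ * (-(A' * (A r)⁻¹)) := by rw [h1]
      _ = -((A r)⁻¹ * A' * (A r)⁻¹) := by rw [mul_neg, mul_assoc]
  intro i j
  have := hB' i j
  rwa [hBval] at this


/-- Action of the two-fold SUSY transformation operator `L = (w̃₂ - ∂)(w₁ - ∂)` on a
matrix solution `ψ₀` of the initial Schrödinger equation:
`Lψ₀ = [(-k² + E₁)·1 + W₂(w₁ - w_k)]ψ₀`, with `W₂ = (E₁-E₂)(w₂-w₁)⁻¹`. -/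
theorem twofold_SUSY_action_asymmetric_form
    (V u₁ u₁' u₁'' u₂ u₂' u₂'' ψ₀ ψ₀' ψ₀'' : ℝ → Matrix (Fin 2) (Fin 2) ℂ)
    (E₁ E₂ k2 : ℂ)
    (hV : ContinuousOn V (Ioi 0))
    (hu₁ : ∀ r ∈ Ioi (0:ℝ), ∀ i j, HasDerivAt (fun t => u₁ t i j) (u₁' r i j) r)
    (hu₁' : ∀ r ∈ Ioi (0:ℝ), ∀ i j, HasDerivAt (fun t => u₁' t i j) (u₁'' r i j) r)
    (hu₂ : ∀ r ∈ Ioi (0:ℝ), ∀ i j, HasDerivAt (fun t => u₂ t i j) (u₂' r i j) r)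
    (hu₂' : ∀ r ∈ Ioi (0:ℝ), ∀ i j, HasDerivAt (fun t => u₂' t i j) (u₂'' r i j) r)
    (hψ₀ : ∀ r ∈ Ioi (0:ℝ), ∀ i j, HasDerivAt (fun t => ψ₀ t i j) (ψ₀' r i j) r)
    (hψ₀' : ∀ r ∈ Ioi (0:ℝ), ∀ i j, HasDerivAt (fun t => ψ₀' t i j) (ψ₀'' r i j) r)
    (heq₁ : ∀ r ∈ Ioi (0:ℝ), -u₁'' r + V r * u₁ r = E₁ • u₁ r)
    (heq₂ : ∀ r ∈ Ioi (0:ℝ), -u₂'' r + V r * u₂ r = E₂ • u₂ r)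
    (heqψ : ∀ r ∈ Ioi (0:ℝ), -ψ₀'' r + V r * ψ₀ r = k2 • ψ₀ r)
    (hinv₁ : ∀ r ∈ Ioi (0:ℝ), IsUnit (u₁ r))
    (hinv₂ : ∀ r ∈ Ioi (0:ℝ), IsUnit (u₂ r))
    (hinvψ : ∀ r ∈ Ioi (0:ℝ), IsUnit (ψ₀ r))
    (w₁ w₂ wk : ℝ → Matrix (Fin 2) (Fin 2) ℂ)
    (hw₁ : ∀ r, w₁ r = u₁' r * (u₁ r)⁻¹)
    (hw₂ : ∀ r, w₂ r = u₂' r * (u₂ r)⁻¹)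
    (hwk : ∀ r, wk r = ψ₀' r * (ψ₀ r)⁻¹)
    (hinvw : ∀ r ∈ Ioi (0:ℝ), IsUnit (w₂ r - w₁ r))
    (W₂ : ℝ → Matrix (Fin 2) (Fin 2) ℂ)
    (hW₂ : ∀ r, W₂ r = (E₁ - E₂) • (w₂ r - w₁ r)⁻¹)
    (tu₂ tu₂' : ℝ → Matrix (Fin 2) (Fin 2) ℂ)
    (htu₂ : ∀ r, tu₂ r = (w₁ r - w₂ r) * u₂ r)
    (htu₂' : ∀ r ∈ Ioi (0:ℝ), ∀ i j, HasDerivAt (fun t => tu₂ t i j) (tu₂' r i j) r)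
    (tw₂ : ℝ → Matrix (Fin 2) (Fin 2) ℂ)
    (htw₂ : ∀ r, tw₂ r = tu₂' r * (tu₂ r)⁻¹)
    (g g' : ℝ → Matrix (Fin 2) (Fin 2) ℂ)
    (hg : ∀ r, g r = w₁ r * ψ₀ r - ψ₀' r)
    (hg' : ∀ r ∈ Ioi (0:ℝ), ∀ i j, HasDerivAt (fun t => g t i j) (g' r i j) r) :
    ∀ r ∈ Ioi (0:ℝ),
      tw₂ r * g r - g' r
        = ((-k2 + E₁) • (1 : Matrix (Fin 2) (Fin 2) ℂ)
            + W₂ r * (w₁ r - wk r)) * ψ₀ r := by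
  intro r hr
  have hmem : Ioi (0:ℝ) ∈ nhds r := isOpen_Ioi.mem_nhds hr
  have hloc₁ : ∀ᶠ t in nhds r, IsUnit (u₁ t) :=
    Filter.eventually_of_mem hmem (fun t ht => hinv₁ t ht)
  have hloc₂ : ∀ᶠ t in nhds r, IsUnit (u₂ t) :=
    Filter.eventually_of_mem hmem (fun t ht => hinv₂ t ht)
  have hB₁ := entry_inv_hasDerivAt (hu₁ r hr) hloc₁ (hinv₁ r hr)
  have hB₂ := entry_inv_hasDerivAt (hu₂ r hr) hloc₂ (hinv₂ r hr)
  have hU₁ : u₁ r * (u₁ r)⁻¹ = 1 :=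
    Matrix.mul_nonsing_inv _ ((Matrix.isUnit_iff_isUnit_det _).1 (hinv₁ r hr))
  have hU₂ : u₂ r * (u₂ r)⁻¹ = 1 :=
    Matrix.mul_nonsing_inv _ ((Matrix.isUnit_iff_isUnit_det _).1 (hinv₂ r hr))
  have hU₂' : (u₂ r)⁻¹ * u₂ r = 1 :=
    Matrix.nonsing_inv_mul _ ((Matrix.isUnit_iff_isUnit_det _).1 (hinv₂ r hr))
  have hSr : (w₂ r - w₁ r) * (w₂ r - w₁ r)⁻¹ = 1 :=
    Matrix.mul_nonsing_inv _ ((Matrix.isUnit_iff_isUnit_det _).1 (hinvw r hr))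
  have hu2p : u₂' r = w₂ r * u₂ r := by
    rw [hw₂, mul_assoc, hU₂', mul_one]
  have hpsip : wk r * ψ₀ r = ψ₀' r := by
    rw [hwk, mul_assoc, Matrix.nonsing_inv_mul _
      ((Matrix.isUnit_iff_isUnit_det _).1 (hinvψ r hr)), mul_one]
  have he₁ : u₁'' r = V r * u₁ r - E₁ • u₁ r := by
    rw [← heq₁ r hr]; abel
  have he₂ : u₂'' r = V r * u₂ r - E₂ • u₂ r := by
    rw [← heq₂ r hr]; abel
  have heψ : ψ₀'' r = V r * ψ₀ r - k2 • ψ₀ r := by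
    rw [← heqψ r hr]; abel
  set W1' : Matrix (Fin 2) (Fin 2) ℂ :=
    u₁'' r * (u₁ r)⁻¹ + u₁' r * (-((u₁ r)⁻¹ * u₁' r * (u₁ r)⁻¹)) with hW1'def
  set W2' : Matrix (Fin 2) (Fin 2) ℂ :=
    u₂'' r * (u₂ r)⁻¹ + u₂' r * (-((u₂ r)⁻¹ * u₂' r * (u₂ r)⁻¹)) with hW2'def
  have hw₁d : ∀ i j, HasDerivAt (fun t => w₁ t i j) (W1' i j) r := by
    intro i j
    have h := entry_mul_hasDerivAt (hu₁' r hr) hB₁ i j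
    simpa only [← hw₁] using h
  have hw₂d : ∀ i j, HasDerivAt (fun t => w₂ t i j) (W2' i j) r := by
    intro i j
    have h := entry_mul_hasDerivAt (hu₂' r hr) hB₂ i j
    simpa only [← hw₂] using h
  have hW1 : W1' = V r - E₁ • 1 - w₁ r * w₁ r := by
    rw [hW1'def, he₁, mul_neg, ← sub_eq_add_neg, sub_mul,
      mul_assoc (V r), hU₁, mul_one, smul_mul_assoc, hU₁, hw₁]
    simp only [mul_assoc]
  have hW2 : W2' = V r - E₂ • 1 - w₂ r * w₂ r := by
    rw [hW2'def, he₂, mul_neg, ← sub_eq_add_neg, sub_mul,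
      mul_assoc (V r), hU₂, mul_one, smul_mul_assoc, hU₂, hw₂]
    simp only [mul_assoc]
  -- value of g'
  have hg'eq : g' r = W1' * ψ₀ r + w₁ r * ψ₀' r - ψ₀'' r := by
    ext i j
    have hm := entry_mul_hasDerivAt hw₁d (hψ₀ r hr) i j
    have h := hm.fun_sub (hψ₀' r hr i j)
    have h2 : HasDerivAt (fun t => g t i j)
        ((W1' * ψ₀ r + w₁ r * ψ₀' r - ψ₀'' r) i j) r := by
      simpa only [hg, Matrix.sub_apply] using h
    exact (hg' r hr i j).unique h2
  -- value of tu₂'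
  have htu₂eq : tu₂' r = (W1' - W2') * u₂ r + (w₁ r - w₂ r) * u₂' r := by
    ext i j
    have hsub : ∀ i j, HasDerivAt (fun t => (w₁ t - w₂ t) i j) ((W1' - W2') i j) r := by
      intro i j
      simpa only [Matrix.sub_apply] using (hw₁d i j).fun_sub (hw₂d i j)
    have hm := entry_mul_hasDerivAt hsub (hu₂ r hr) i j
    have h2 : HasDerivAt (fun t => tu₂ t i j)
        (((W1' - W2') * u₂ r + (w₁ r - w₂ r) * u₂' r) i j) r := by
      simpa only [htu₂] using hm
    exact (htu₂' r hr i j).unique h2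
  -- closed form of tu₂'
  have hTu : tu₂' r = ((E₂ - E₁) • 1 + w₁ r * (w₂ r - w₁ r)) * u₂ r := by
    rw [htu₂eq, hW1, hW2, hu2p, sub_smul]
    noncomm_ring
  -- inverse of tu₂
  have hTinv : (tu₂ r)⁻¹ = (u₂ r)⁻¹ * (-(w₂ r - w₁ r)⁻¹) := by
    rw [htu₂ r, Matrix.mul_inv_rev]
    congr 1
    apply Matrix.inv_eq_right_inv
    rw [show w₁ r - w₂ r = -(w₂ r - w₁ r) from (neg_sub _ _).symm, neg_mul_neg, hSr]
  -- closed form of tw₂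
  have htw : tw₂ r = W₂ r - w₁ r := by
    rw [htw₂, hTu, hTinv, mul_assoc _ (u₂ r), ← mul_assoc (u₂ r), hU₂, one_mul,
      mul_neg, add_mul, smul_mul_assoc, one_mul, mul_assoc, hSr, mul_one, neg_add,
      ← neg_smul, neg_sub, ← sub_eq_add_neg, hW₂]
  -- final algebra
  have hRHS : (w₁ r - wk r) * ψ₀ r = w₁ r * ψ₀ r - ψ₀' r := by
    rw [sub_mul, hpsip]
  rw [htw, hg, hg'eq, hW1, heψ, add_mul, mul_assoc (W₂ r), hRHS,
    show (-k2 + E₁) • (1 : Matrix (Fin 2) (Fin 2) ℂ)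
        = -(k2 • (1 : Matrix (Fin 2) (Fin 2) ℂ)) + E₁ • 1 by rw [add_smul, neg_smul],
    show k2 • ψ₀ r = (k2 • (1 : Matrix (Fin 2) (Fin 2) ℂ)) * ψ₀ r by
      rw [smul_mul_assoc, one_mul]]
  noncomm_ring
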